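/- Let A, B, K be matrices with ρ(A+BK) < 1, and let Â, B̂ satisfy ‖A − Â‖₂ ≤ ε_A, ‖B − B̂‖₂ ≤ ε_B. Define ζ = (ε_A + ε_B‖K‖₂) · sup_{|z|=1} ‖(zI − A − BK)^{-1}‖₂. If ζ ≤ 1/(1+√2), then for every Δ^⊤ = (A B) − (Â B̂) one has, for all z on the unit circle, ‖Δ^⊤ (I;K) (zI − Â − B̂K)^{-1}‖₂ < 1 (the robust SLS H∞ constraint is satisfied). -/

import Mathlib

open Matrix

noncomputable def opNorm {m n : Type*} [Fintype m] [Fintype n] [DecidableEq n]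
    (M : Matrix m n ℝ) : ℝ :=
  ‖(Matrix.toEuclideanLin M).toContinuousLinearMap‖

noncomputable def opNormC {m n : Type*} [Fintype m] [Fintype n] [DecidableEq n]
    (M : Matrix m n ℂ) : ℝ :=
  ‖(Matrix.toEuclideanLin M).toContinuousLinearMap‖

open scoped Matrix.Norms.L2Operator

lemma opNormC_eq_norm {n : Type*} [Fintype n] [DecidableEq n] (M : Matrix n n ℂ) :
    opNormC M = ‖M‖ := rfl

lemma opNorm_eq_norm {m n : Type*} [Fintype m] [Fintype n] [DecidableEq n] (M : Matrix m n ℝ) :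
    opNorm M = ‖M‖ := rfl

lemma opNormC_map_le {m n : Type*} [Fintype m] [Fintype n] [DecidableEq n]
    (X : Matrix m n ℝ) : opNormC (X.map Complex.ofReal) ≤ opNorm X := by
  have hg : (0:ℝ) ≤ opNorm X := norm_nonneg _
  refine ContinuousLinearMap.opNorm_le_bound _ hg ?_
  intro x
  set g := (Matrix.toEuclideanLin X).toContinuousLinearMap with hgdef
  set xr : EuclideanSpace ℝ n := (WithLp.equiv 2 _).symm (fun j => (x j).re) with hxr
  set xi : EuclideanSpace ℝ n := (WithLp.equiv 2 _).symm (fun j => (x j).im) with hxi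
  have happ : ∀ i, (Matrix.toEuclideanLin (X.map Complex.ofReal)).toContinuousLinearMap x i
      = ∑ j, (X i j : ℂ) * x j := fun i => rfl
  have happr : ∀ i, g xr i = ∑ j, X i j * (x j).re := fun i => rfl
  have happi : ∀ i, g xi i = ∑ j, X i j * (x j).im := fun i => rfl
  have key : ‖(Matrix.toEuclideanLin (X.map Complex.ofReal)).toContinuousLinearMap x‖^2
      = ‖g xr‖^2 + ‖g xi‖^2 := by
    rw [PiLp.norm_sq_eq_of_L2, PiLp.norm_sq_eq_of_L2, PiLp.norm_sq_eq_of_L2,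
      ← Finset.sum_add_distrib]
    refine Finset.sum_congr rfl fun i _ => ?_
    rw [happ, happr, happi]
    rw [Complex.sq_norm, Complex.normSq_apply, Complex.re_sum, Complex.im_sum]
    simp only [Complex.mul_re, Complex.mul_im, Complex.ofReal_re, Complex.ofReal_im,
      zero_mul, sub_zero, zero_add, add_zero]
    rw [Real.norm_eq_abs, Real.norm_eq_abs, sq_abs, sq_abs]
    ring
  have hx : ‖x‖^2 = ‖xr‖^2 + ‖xi‖^2 := by
    rw [PiLp.norm_sq_eq_of_L2, PiLp.norm_sq_eq_of_L2, PiLp.norm_sq_eq_of_L2,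
      ← Finset.sum_add_distrib]
    refine Finset.sum_congr rfl fun i _ => ?_
    rw [Complex.sq_norm, Complex.normSq_apply]
    rw [show xr i = (x i).re from rfl, show xi i = (x i).im from rfl]
    rw [Real.norm_eq_abs, Real.norm_eq_abs, sq_abs, sq_abs]
    ring
  have h1 : ‖g xr‖ ≤ opNorm X * ‖xr‖ := g.le_opNorm xr
  have h2 : ‖g xi‖ ≤ opNorm X * ‖xi‖ := g.le_opNorm xi
  refine le_of_pow_le_pow_left₀ (two_ne_zero) (by positivity) ?_
  rw [key, mul_pow]
  nlinarith [norm_nonneg (g xr), norm_nonneg (g xi), norm_nonneg xr, norm_nonneg xi, hx]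

lemma norm_unit_inv_le {R : Type*} [NormedRing R]
    (hone : ‖(1:R)‖ ≤ 1) (t : R) (ht : ‖t‖ < 1) (v : Rˣ) (hv : (v:R) = 1 + t) :
    ‖(↑v⁻¹ : R)‖ ≤ (1 - ‖t‖)⁻¹ := by
  set w := (↑v⁻¹ : R) with hwdef
  have hw : w = 1 - t * w := by
    have h2 : (1 + t) * w = 1 := by rw [← hv]; exact v.mul_inv
    have h3 : w + t * w = 1 := by rw [← h2, add_mul, one_mul]
    exact (eq_sub_of_add_eq h3)
  have h4 : ‖w‖ ≤ 1 + ‖t‖ * ‖w‖ := by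
    calc ‖w‖ = ‖1 - t*w‖ := by rw [← hw]
    _ ≤ ‖(1:R)‖ + ‖t*w‖ := norm_sub_le _ _
    _ ≤ 1 + ‖t‖*‖w‖ := add_le_add hone (norm_mul_le _ _)
  have h5 : 0 < 1 - ‖t‖ := by linarith
  rw [inv_eq_one_div, le_div_iff₀ h5]
  nlinarith [norm_nonneg w]

lemma map_mul_ofReal {l m n : Type*} [Fintype m] (P : Matrix l m ℝ) (Q : Matrix m n ℝ) :
    (P * Q).map Complex.ofReal = P.map Complex.ofReal * Q.map Complex.ofReal := by
  ext i j
  simp [Matrix.mul_apply, Matrix.map_apply]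

lemma map_sub_ofReal {m n : Type*} (P Q : Matrix m n ℝ) :
    (P - Q).map Complex.ofReal = P.map Complex.ofReal - Q.map Complex.ofReal := by
  ext i j
  simp [Matrix.map_apply, Matrix.sub_apply]

lemma fromColumns_sub_fromColumns {m n₁ n₂ : Type*} (A C : Matrix m n₁ ℝ) (B D : Matrix m n₂ ℝ) :
    fromCols A B - fromCols C D = fromCols (A - C) (B - D) := by
  ext i j; cases j <;> simp [fromCols]

/-- Lemma 4.2 of Dean et al.: if `ρ(A+BK) < 1`,
`‖A−Â‖₂ ≤ ε_A`, `‖B−B̂‖₂ ≤ ε_B` and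
`ζ = (ε_A + ε_B‖K‖₂)·sup_{|z|=1}‖(zI−A−BK)⁻¹‖₂ ≤ 1/(1+√2)`, then for all `z` on
the unit circle `‖Δᵀ(I;K)(zI−Â−B̂K)⁻¹‖₂ < 1`, where `Δᵀ = (A B) − (Â B̂)`. -/
theorem dean_sufficient_condition (dx du : ℕ)
    (A Ahat : Matrix (Fin dx) (Fin dx) ℝ) (B Bhat : Matrix (Fin dx) (Fin du) ℝ)
    (K : Matrix (Fin du) (Fin dx) ℝ)
    (hstab : ∀ μ ∈ spectrum ℂ ((A + B * K).map Complex.ofReal), ‖μ‖ < 1)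
    (εA εB : ℝ)
    (hA : opNorm (A - Ahat) ≤ εA) (hB : opNorm (B - Bhat) ≤ εB)
    (ζ : ℝ)
    (hζ : ζ = (εA + εB * opNorm K) *
      ⨆ z : {z : ℂ // ‖z‖ = 1}, opNormC
        ((z.1 • (1 : Matrix (Fin dx) (Fin dx) ℂ) - (A + B * K).map Complex.ofReal)⁻¹))
    (hζsmall : ζ ≤ 1 / (1 + Real.sqrt 2)) :
    ∀ z : ℂ, ‖z‖ = 1 →
      opNormC (((Matrix.fromCols A B - Matrix.fromCols Ahat Bhat).map Complex.ofReal) *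
        ((Matrix.fromRows (1 : Matrix (Fin dx) (Fin dx) ℝ) K).map Complex.ofReal) *
        (z • (1 : Matrix (Fin dx) (Fin dx) ℂ) -
          (Ahat + Bhat * K).map Complex.ofReal)⁻¹) < 1 := by
  haveI : CompleteSpace (Matrix (Fin dx) (Fin dx) ℂ) := FiniteDimensional.complete ℂ _
  haveI : CompactSpace {z : ℂ // ‖z‖ = 1} := by
    have h : IsCompact {z : ℂ | ‖z‖ = 1} := by
      have hset : {z : ℂ | ‖z‖ = 1} = Metric.sphere 0 1 := by
        ext z; simp [mem_sphere_zero_iff_norm]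
      rw [hset]; exact isCompact_sphere 0 1
    exact isCompact_iff_compactSpace.mp h
  set 𝕄 := Matrix (Fin dx) (Fin dx) ℂ
  set Mc : 𝕄 := (A + B * K).map Complex.ofReal with hMc
  -- every point of the circle gives a unit
  have hunit : ∀ z : ℂ, ‖z‖ = 1 → IsUnit (z • (1:𝕄) - Mc) := by
    intro z hz
    have hz' : z ∉ spectrum ℂ Mc := by
      intro hmem
      have := hstab z hmem
      rw [hz] at this; exact lt_irrefl 1 this
    have := spectrum.notMem_iff.mp hz'
    rwa [Algebra.algebraMap_eq_smul_one] at this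
  -- the sup
  set f : {z : ℂ // ‖z‖ = 1} → ℝ := fun w =>
    opNormC ((w.1 • (1 : Matrix (Fin dx) (Fin dx) ℂ) - (A + B * K).map Complex.ofReal)⁻¹)
    with hf
  set S : ℝ := ⨆ w : {z : ℂ // ‖z‖ = 1}, f w with hS
  have hζeq : ζ = (εA + εB * opNorm K) * S := hζ
  -- continuity and boundedness of f
  have hfcont : Continuous f := by
    have hrw : f = fun w : {z : ℂ // ‖z‖ = 1} => ‖Ring.inverse ((w.1 : ℂ) • (1:𝕄) - Mc)‖ := by
      funext w
      rw [hf]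
      simp only
      rw [opNormC_eq_norm, Matrix.nonsing_inv_eq_ringInverse]
    rw [hrw]
    refine continuous_norm.comp ?_
    rw [continuous_iff_continuousAt]
    intro w
    obtain ⟨u, hu⟩ := hunit w.1 w.2
    have hc : Continuous fun w : {z : ℂ // ‖z‖ = 1} => (w.1 : ℂ) • (1:𝕄) - Mc :=
      (continuous_subtype_val.smul continuous_const).sub continuous_const
    exact ContinuousAt.comp (hu ▸ NormedRing.inverse_continuousAt u) hc.continuousAt
  have hbdd : BddAbove (Set.range f) := (isCompact_range hfcont).bddAbove
  -- basic nonnegativity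
  have hεA0 : 0 ≤ εA := le_trans (norm_nonneg _) hA
  have hεB0 : 0 ≤ εB := le_trans (norm_nonneg _) hB
  have hK0 : 0 ≤ opNorm K := norm_nonneg _
  have hε0 : 0 ≤ εA + εB * opNorm K := by positivity
  -- sqrt 2 facts
  have hsqrt2 : 1 < Real.sqrt 2 := by
    nlinarith [Real.sq_sqrt (by norm_num : (0:ℝ) ≤ 2), Real.sqrt_nonneg 2]
  have hζhalf : ζ < 1/2 := by
    have h12 : 1 / (1 + Real.sqrt 2) < 1/2 := by
      rw [div_lt_div_iff₀ (by linarith) (by norm_num)]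
      linarith
    linarith
  intro z hz
  obtain ⟨u, hu⟩ := hunit z hz
  set R : 𝕄 := (↑u⁻¹ : 𝕄) with hRdef
  have hRinv : (z • (1:𝕄) - Mc)⁻¹ = R := by
    apply Matrix.inv_eq_right_inv
    rw [← hu]; exact u.mul_inv
  have hRS : ‖R‖ ≤ S := by
    have := le_ciSup hbdd (⟨z, hz⟩ : {z : ℂ // ‖z‖ = 1})
    rw [hf] at this
    simp only at this
    rwa [opNormC_eq_norm, hRinv] at this
  have hS0 : 0 ≤ S := le_trans (norm_nonneg R) hRS
  have hζ0 : 0 ≤ ζ := by rw [hζeq]; positivity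
  -- the perturbation
  set Dr : Matrix (Fin dx) (Fin dx) ℝ := (A - Ahat) + (B - Bhat) * K with hDr
  set Dc : 𝕄 := Dr.map Complex.ofReal with hDc
  have hDcnorm : ‖Dc‖ ≤ εA + εB * opNorm K := by
    rw [← opNormC_eq_norm]
    refine le_trans (opNormC_map_le Dr) ?_
    rw [hDr, opNorm_eq_norm]
    calc ‖(A - Ahat) + (B - Bhat) * K‖ ≤ ‖A - Ahat‖ + ‖(B - Bhat) * K‖ := norm_add_le _ _
    _ ≤ ‖A - Ahat‖ + ‖B - Bhat‖ * ‖K‖ := by linarith [Matrix.l2_opNorm_mul (B - Bhat) K]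
    _ ≤ εA + εB * opNorm K := by
        rw [opNorm_eq_norm] at hA hB ⊢
        have := mul_le_mul_of_nonneg_right hB (norm_nonneg K)
        linarith
  set t : 𝕄 := R * Dc with ht
  have htnorm : ‖t‖ ≤ ζ := by
    rw [ht, hζeq]
    calc ‖R * Dc‖ ≤ ‖R‖ * ‖Dc‖ := norm_mul_le _ _
    _ ≤ S * (εA + εB * opNorm K) :=
        mul_le_mul hRS hDcnorm (norm_nonneg _) hS0
    _ = (εA + εB * opNorm K) * S := mul_comm _ _
  have htlt : ‖t‖ < 1 := lt_of_le_of_lt htnorm (by linarith)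
  have hone : ‖(1 : 𝕄)‖ ≤ 1 := by
    rw [Matrix.cstar_norm_def, _root_.map_one, ContinuousLinearMap.one_def]
    exact ContinuousLinearMap.norm_id_le
  set v : 𝕄ˣ := Units.oneSub (-t) (by rwa [norm_neg]) with hvdef
  have hv : (↑v : 𝕄) = 1 + t := by
    rw [hvdef]
    show 1 - (-t) = 1 + t
    rw [sub_neg_eq_add]
  -- factorization
  have hMhat : (Ahat + Bhat * K).map Complex.ofReal = Mc - Dc := by
    have hm : Ahat + Bhat * K = (A + B * K) - ((A - Ahat) + (B - Bhat) * K) := by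
      rw [Matrix.sub_mul]; abel
    rw [hm, hMc, hDc, hDr, map_sub_ofReal]
  have hfact : z • (1:𝕄) - (Ahat + Bhat * K).map Complex.ofReal = ↑u * ↑v := by
    rw [hMhat, hv, mul_add, mul_one]
    have h2 : (↑u : 𝕄) * t = Dc := by
      rw [ht, hRdef, ← mul_assoc, u.mul_inv, one_mul]
    rw [h2, hu]
    abel
  have hinv : (z • (1:𝕄) - (Ahat + Bhat * K).map Complex.ofReal)⁻¹ = ↑v⁻¹ * ↑u⁻¹ := by
    apply Matrix.inv_eq_right_inv
    rw [hfact, mul_assoc, ← mul_assoc (↑v : 𝕄), v.mul_inv, one_mul, u.mul_inv]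
  -- rewrite the goal
  have hDfact : ((Matrix.fromCols A B - Matrix.fromCols Ahat Bhat).map Complex.ofReal) *
      ((Matrix.fromRows (1 : Matrix (Fin dx) (Fin dx) ℝ) K).map Complex.ofReal) = Dc := by
    rw [fromColumns_sub_fromColumns, ← map_mul_ofReal, Matrix.fromCols_mul_fromRows,
      mul_one, hDc, hDr]
  rw [hDfact, hinv, opNormC_eq_norm]
  -- norm bounds
  have hvnorm : ‖(↑v⁻¹ : 𝕄)‖ ≤ (1 - ζ)⁻¹ := by
    refine le_trans (norm_unit_inv_le hone t htlt v hv) ?_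
    have h1ζ : 0 < 1 - ζ := by linarith
    exact inv_anti₀ h1ζ (by linarith)
  have h1ζ : 0 < 1 - ζ := by linarith
  have hmain : ‖Dc * ((↑v⁻¹ : 𝕄) * (↑u⁻¹ : 𝕄))‖ ≤ (εA + εB * opNorm K) * ((1 - ζ)⁻¹ * S) := by
    calc ‖Dc * ((↑v⁻¹ : 𝕄) * (↑u⁻¹ : 𝕄))‖ ≤ ‖Dc‖ * ‖(↑v⁻¹ : 𝕄) * (↑u⁻¹ : 𝕄)‖ := norm_mul_le _ _
    _ ≤ ‖Dc‖ * (‖(↑v⁻¹ : 𝕄)‖ * ‖(↑u⁻¹ : 𝕄)‖) := by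
        have := norm_mul_le (↑v⁻¹ : 𝕄) (↑u⁻¹ : 𝕄)
        nlinarith [norm_nonneg Dc, norm_nonneg ((↑v⁻¹ : 𝕄) * (↑u⁻¹ : 𝕄))]
    _ ≤ (εA + εB * opNorm K) * ((1 - ζ)⁻¹ * S) := by
        refine mul_le_mul hDcnorm ?_ (by positivity) hε0
        exact mul_le_mul hvnorm hRS (norm_nonneg _) (by positivity)
  refine lt_of_le_of_lt hmain ?_
  have heq : (εA + εB * opNorm K) * ((1 - ζ)⁻¹ * S) = ζ / (1 - ζ) := by
    rw [hζeq]; field_simp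
  rw [heq, div_lt_one h1ζ]
  linarith
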